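/- arXiv:1010.2571 — 2 statements merged into one kernel-verified Lean document; each statement's English description precedes it below -/
import Mathlib

section
/- Let H be a K×L complex matrix (K < L) with SVD H = VΣU†, and partition the right singular vectors as U = [C F] where F consists of the columns indexed by a set B ⊆ {1,…,L} with B disjoint from A = {1,…,N_e} (the indices of the N_e retained left singular directions, with singular values in descending order). Let G = [V]_A, and let Ĝ_o be an N_e×M matrix with unit-norm columns, F̂ an L×N_p matrix with orthonormal columns, and F̂_o an N_p×M matrix with orthonormal columns. Then the residual interference power I = ν P ‖Ĝ_o† G† H F̂ F̂_o‖_F² satisfies I ≤ ν M N_p P · ε · max_{ℓ∈A} λ_ℓ, where λ_1 ≥ … ≥ λ_K are the squared singular values of H and ε = ‖C† F̂‖_F² / N_p. -/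
open Matrix

noncomputable def frobSq {m n : Type*} [Fintype m] [Fintype n] (A : Matrix m n ℂ) : ℝ :=
  ∑ i, ∑ j, ‖A i j‖ ^ 2

lemma frobSq_nonneg {m n : Type*} [Fintype m] [Fintype n] (A : Matrix m n ℂ) :
    0 ≤ frobSq A :=
  Finset.sum_nonneg fun _ _ => Finset.sum_nonneg fun _ _ => sq_nonneg _

lemma frobSq_eq_trace {m n : Type*} [Fintype m] [Fintype n] (A : Matrix m n ℂ) :
    frobSq A = (Matrix.trace (Aᴴ * A)).re := by
  simp only [Matrix.trace, Matrix.diag, Matrix.mul_apply, Matrix.conjTranspose_apply,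
    Complex.re_sum]
  rw [Finset.sum_comm]
  refine Finset.sum_congr rfl fun i _ => Finset.sum_congr rfl fun j _ => ?_
  rw [Complex.star_def, ← Complex.normSq_eq_conj_mul_self]
  simp [Complex.normSq_eq_norm_sq]
  norm_cast

lemma frobSq_mul_le {n p q : Type*} [Fintype n] [Fintype p] [Fintype q] [DecidableEq q]
    (Y : Matrix n p ℂ) (Fo : Matrix p q ℂ) (h : Foᴴ * Fo = 1) :
    frobSq (Y * Fo) ≤ frobSq Y := by
  set Pm : Matrix p p ℂ := Fo * Foᴴ with hPm
  have hPherm : Pmᴴ = Pm := by simp [hPm, Matrix.conjTranspose_mul]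
  have hPP : Pm * Pm = Pm := by
    rw [hPm, Matrix.mul_assoc, ← Matrix.mul_assoc Foᴴ, h, Matrix.one_mul]
  set Z := Y - Y * Pm with hZ
  have key : Matrix.trace (Yᴴ * Y) =
      Matrix.trace ((Y * Fo)ᴴ * (Y * Fo)) + Matrix.trace (Zᴴ * Z) := by
    have e1 : Matrix.trace ((Y * Fo)ᴴ * (Y * Fo)) = Matrix.trace (Yᴴ * Y * Pm) := by
      rw [Matrix.conjTranspose_mul]
      rw [show Foᴴ * Yᴴ * (Y * Fo) = Foᴴ * (Yᴴ * Y * Fo) by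
        simp only [Matrix.mul_assoc]]
      rw [Matrix.trace_mul_comm]
      rw [show Yᴴ * Y * Fo * Foᴴ = Yᴴ * Y * Pm by rw [hPm, Matrix.mul_assoc]]
    have e2 : Zᴴ * Z = Yᴴ * Y - Yᴴ * Y * Pm - Pm * (Yᴴ * Y) + Pm * (Yᴴ * Y) * Pm := by
      rw [hZ]
      simp only [Matrix.conjTranspose_sub, Matrix.conjTranspose_mul, hPherm,
        Matrix.sub_mul, Matrix.mul_sub, Matrix.mul_assoc]
      abel
    have e3 : Matrix.trace (Pm * (Yᴴ * Y)) = Matrix.trace (Yᴴ * Y * Pm) :=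
      Matrix.trace_mul_comm _ _
    have e4 : Matrix.trace (Pm * (Yᴴ * Y) * Pm) = Matrix.trace (Yᴴ * Y * Pm) := by
      rw [Matrix.trace_mul_comm, ← Matrix.mul_assoc, hPP]
      exact Matrix.trace_mul_comm _ _
    rw [e1, e2]
    simp only [Matrix.trace_add, Matrix.trace_sub, e3, e4]
    ring
  have : frobSq Y = frobSq (Y * Fo) + frobSq Z := by
    rw [frobSq_eq_trace, frobSq_eq_trace, frobSq_eq_trace, key, Complex.add_re]
  linarith [frobSq_nonneg Z]

lemma frobSq_conjT_mul_le {n m q : Type*} [Fintype n] [Fintype m] [Fintype q]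
    (Go : Matrix n m ℂ) (hGo : ∀ k, ∑ i, ‖Go i k‖ ^ 2 = 1) (W : Matrix n q ℂ) :
    frobSq (Goᴴ * W) ≤ (Fintype.card m) * frobSq W := by
  have hentry : ∀ (k : m) (j : q), ‖(Goᴴ * W) k j‖ ^ 2 ≤ ∑ i, ‖W i j‖ ^ 2 := by
    intro k j
    calc ‖(Goᴴ * W) k j‖ ^ 2
        ≤ (∑ i, ‖Go i k‖ * ‖W i j‖) ^ 2 := by
          have h1 : ‖(Goᴴ * W) k j‖ ≤ ∑ i, ‖Go i k‖ * ‖W i j‖ := by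
            rw [Matrix.mul_apply]
            refine (norm_sum_le _ _).trans ?_
            refine Finset.sum_le_sum fun i _ => ?_
            rw [Matrix.conjTranspose_apply, norm_mul, norm_star]
          have h2 : (0:ℝ) ≤ ‖(Goᴴ * W) k j‖ := norm_nonneg _
          exact pow_le_pow_left₀ h2 h1 2
      _ ≤ (∑ i, ‖Go i k‖ ^ 2) * (∑ i, ‖W i j‖ ^ 2) :=
          Finset.sum_mul_sq_le_sq_mul_sq _ _ _
      _ = ∑ i, ‖W i j‖ ^ 2 := by rw [hGo k, one_mul]
  calc frobSq (Goᴴ * W) ≤ ∑ _k : m, ∑ j : q, ∑ i, ‖W i j‖ ^ 2 := by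
        refine Finset.sum_le_sum fun k _ => Finset.sum_le_sum fun j _ => hentry k j
    _ = (Fintype.card m) * frobSq W := by
        rw [Finset.sum_const, Finset.card_univ, nsmul_eq_mul]
        congr 1
        rw [frobSq, Finset.sum_comm]

/-- Residual interference bound with quantized cooperative feedback.
`H = V Σ Uᴴ` (K < L) with squared singular values `λ₁ ≥ … ≥ λ_K ≥ 0`; `A = {0,…,Ne-1}`,
`B ⊆ Fin L` disjoint from `A` with `|B| = Np`; `G = [V]_A` is the inner equalizer, the
ideal inner precoder is `F = [U]_B`, `C` collects the remaining columns of `U`;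
`F̂` is the quantized inner precoder (orthonormal columns), `Ĝₒ` has unit-norm columns,
`F̂ₒ` has orthonormal columns. Then
`I = ν P ‖Ĝₒᴴ Gᴴ H F̂ F̂ₒ‖_F² ≤ ν M Np P ε max_{ℓ∈A} λ_ℓ` with `ε = ‖Cᴴ F̂‖_F² / Np`. -/
theorem stmt6 {K L Ne Np M : ℕ} (hKL : K < L) (hNe : Ne ≤ K) (hNp : 0 < Np)
    (H : Matrix (Fin K) (Fin L) ℂ)
    (V : Matrix (Fin K) (Fin K) ℂ) (U : Matrix (Fin L) (Fin L) ℂ)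
    (hV : V ∈ Matrix.unitaryGroup (Fin K) ℂ) (hU : U ∈ Matrix.unitaryGroup (Fin L) ℂ)
    (lam : ℕ → ℝ) (hlampos : ∀ ℓ, 0 ≤ lam ℓ)
    (hdesc : ∀ i j : ℕ, i ≤ j → lam j ≤ lam i)
    (S : Matrix (Fin K) (Fin L) ℂ)
    (hS : ∀ i j, S i j = if (i : ℕ) = (j : ℕ) then (Real.sqrt (lam (i : ℕ)) : ℂ) else 0)
    (hH : H = V * S * Uᴴ)
    (B : Finset (Fin L)) (hBcard : B.card = Np)
    (hAB : ∀ j ∈ B, ¬ ((j : ℕ) < Ne))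
    (G : Matrix (Fin K) (Fin Ne) ℂ) (hG : ∀ i (a : Fin Ne), G i a = V i (Fin.castLE hNe a))
    (C : Matrix (Fin L) {j // j ∉ B} ℂ) (hC : ∀ i j, C i j = U i j.val)
    (Fhat : Matrix (Fin L) (Fin Np) ℂ) (hFhat : Fhatᴴ * Fhat = 1)
    (Go : Matrix (Fin Ne) (Fin M) ℂ) (hGo : ∀ k, ∑ i, ‖Go i k‖ ^ 2 = 1)
    (Fo : Matrix (Fin Np) (Fin M) ℂ) (hFo : Foᴴ * Fo = 1)
    (ν P ε : ℝ) (hν : 0 < ν) (hP : 0 < P)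
    (hε : ε = frobSq (Cᴴ * Fhat) / Np) :
    ν * P * frobSq (Goᴴ * Gᴴ * H * Fhat * Fo) ≤
      ν * M * Np * P * ε * (⨆ a : Fin Ne, lam (a : ℕ)) := by
  -- trivial case M = 0
  rcases Nat.eq_zero_or_pos M with hM | hM
  · subst hM
    simp [frobSq]
  -- hence Ne > 0
  have hNe0 : 0 < Ne := by
    by_contra h
    push_neg at h
    interval_cases Ne
    have := hGo ⟨0, hM⟩
    simpa using this
  have hεnn : 0 ≤ ε := by
    rw [hε]
    exact div_nonneg (frobSq_nonneg _) (Nat.cast_nonneg _)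
  set spr := ⨆ a : Fin Ne, lam (a : ℕ) with hspr
  have hle_spr : ∀ a : Fin Ne, lam (a : ℕ) ≤ spr := fun a =>
    le_ciSup (f := fun a : Fin Ne => lam (a : ℕ)) (Set.Finite.bddAbove (Set.finite_range _)) a
  have hsprnn : 0 ≤ spr := (hlampos 0).trans (hle_spr ⟨0, hNe0⟩)
  -- index embeddings
  have hNeL : Ne ≤ L := hNe.trans hKL.le
  set aK : Fin Ne → Fin K := Fin.castLE hNe with haK
  set aL : Fin Ne → Fin L := Fin.castLE hNeL with haL
  have hmem : ∀ a : Fin Ne, aL a ∉ B := by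
    intro a hmemB
    exact hAB _ hmemB (by simpa [haL] using a.isLt)
  have hVU : Vᴴ * V = 1 := by
    have := hV.1
    rwa [Matrix.star_eq_conjTranspose] at this
  -- entries of Gᴴ * H
  have hGVS : ∀ (a : Fin Ne) (k : Fin L), ((Gᴴ * V) * S) a k =
      if ((a : ℕ) = (k : ℕ)) then (Real.sqrt (lam (a : ℕ)) : ℂ) else 0 := by
    intro a k
    have hGV : ∀ c : Fin K, (Gᴴ * V) a c = if aK a = c then 1 else 0 := by
      intro c
      have h1 : (Gᴴ * V) a c = (Vᴴ * V) (aK a) c := by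
        simp only [Matrix.mul_apply, Matrix.conjTranspose_apply, hG, haK]
      rw [h1, hVU, Matrix.one_apply]
    rw [Matrix.mul_apply, Finset.sum_eq_single (aK a)]
    · rw [hGV, if_pos rfl, one_mul, hS]
      simp [haK]
    · intro c _ hc
      rw [hGV, if_neg (fun h => hc h.symm), zero_mul]
    · intro h
      exact absurd (Finset.mem_univ _) h
  have hGH : ∀ (a : Fin Ne) (j : Fin L),
      (Gᴴ * H) a j = (Real.sqrt (lam (a : ℕ)) : ℂ) * star (U j (aL a)) := by
    intro a j
    have hassoc : Gᴴ * H = ((Gᴴ * V) * S) * Uᴴ := by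
      rw [hH]; simp only [Matrix.mul_assoc]
    rw [hassoc, Matrix.mul_apply, Finset.sum_eq_single (aL a)]
    · rw [hGVS]
      simp [haL, Matrix.conjTranspose_apply]
    · intro k _ hk
      rw [hGVS, if_neg, zero_mul]
      intro h
      exact hk (Fin.ext (by simp only [haL, Fin.coe_castLE]; omega))
    · intro h
      exact absurd (Finset.mem_univ _) h
  -- entries of X = Gᴴ * H * Fhat
  have hX : ∀ (a : Fin Ne) (p : Fin Np), (Gᴴ * H * Fhat) a p =
      (Real.sqrt (lam (a : ℕ)) : ℂ) * (Cᴴ * Fhat) ⟨aL a, hmem a⟩ p := by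
    intro a p
    rw [Matrix.mul_apply, Matrix.mul_apply, Finset.mul_sum]
    refine Finset.sum_congr rfl fun j _ => ?_
    rw [hGH, Matrix.conjTranspose_apply, hC, mul_assoc]
  -- Frobenius bound for X
  have hCF : frobSq (Cᴴ * Fhat) = ε * Np := by
    rw [hε]
    field_simp
  have hXfrob : frobSq (Gᴴ * H * Fhat) ≤ spr * (ε * Np) := by
    have hg : ∀ x : {j // j ∉ B}, 0 ≤ ∑ p, ‖(Cᴴ * Fhat) x p‖ ^ 2 :=
      fun x => Finset.sum_nonneg fun _ _ => sq_nonneg _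
    have hinj : Function.Injective (fun a : Fin Ne => (⟨aL a, hmem a⟩ : {j // j ∉ B})) := by
      intro a b hab
      have : aL a = aL b := congrArg Subtype.val hab
      exact Fin.castLE_injective hNeL this
    have hsub : ∑ a : Fin Ne, ∑ p, ‖(Cᴴ * Fhat) ⟨aL a, hmem a⟩ p‖ ^ 2 ≤
        frobSq (Cᴴ * Fhat) := by
      calc ∑ a : Fin Ne, ∑ p, ‖(Cᴴ * Fhat) ⟨aL a, hmem a⟩ p‖ ^ 2
          = ∑ x ∈ Finset.univ.image (fun a : Fin Ne => (⟨aL a, hmem a⟩ : {j // j ∉ B})),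
              ∑ p, ‖(Cᴴ * Fhat) x p‖ ^ 2 :=
            (Finset.sum_image (f := fun x : {j // j ∉ B} => ∑ p, ‖(Cᴴ * Fhat) x p‖ ^ 2)
              (fun a _ b _ h => hinj h)).symm
        _ ≤ ∑ x : {j // j ∉ B}, ∑ p, ‖(Cᴴ * Fhat) x p‖ ^ 2 :=
            Finset.sum_le_sum_of_subset_of_nonneg (Finset.subset_univ _)
              (fun x _ _ => hg x)
        _ = frobSq (Cᴴ * Fhat) := rfl
    calc frobSq (Gᴴ * H * Fhat)
        = ∑ a : Fin Ne, lam (a : ℕ) * ∑ p, ‖(Cᴴ * Fhat) ⟨aL a, hmem a⟩ p‖ ^ 2 := by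
          rw [frobSq]
          refine Finset.sum_congr rfl fun a _ => ?_
          rw [Finset.mul_sum]
          refine Finset.sum_congr rfl fun p _ => ?_
          rw [hX, norm_mul, mul_pow, Complex.norm_real, Real.norm_eq_abs]
          rw [abs_of_nonneg (Real.sqrt_nonneg _), Real.sq_sqrt (hlampos _)]
      _ ≤ ∑ a : Fin Ne, spr * ∑ p, ‖(Cᴴ * Fhat) ⟨aL a, hmem a⟩ p‖ ^ 2 := by
          refine Finset.sum_le_sum fun a _ => mul_le_mul_of_nonneg_right (hle_spr a) (hg _)
      _ = spr * ∑ a : Fin Ne, ∑ p, ‖(Cᴴ * Fhat) ⟨aL a, hmem a⟩ p‖ ^ 2 := by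
          rw [Finset.mul_sum]
      _ ≤ spr * frobSq (Cᴴ * Fhat) := mul_le_mul_of_nonneg_left hsub hsprnn
      _ = spr * (ε * Np) := by rw [hCF]
  -- assemble
  have hassoc2 : Goᴴ * Gᴴ * H * Fhat * Fo = Goᴴ * ((Gᴴ * H * Fhat) * Fo) := by
    simp only [Matrix.mul_assoc]
  have hchain : frobSq (Goᴴ * Gᴴ * H * Fhat * Fo) ≤ (M : ℝ) * (spr * (ε * Np)) := by
    rw [hassoc2]
    calc frobSq (Goᴴ * ((Gᴴ * H * Fhat) * Fo))
        ≤ (Fintype.card (Fin M)) * frobSq ((Gᴴ * H * Fhat) * Fo) :=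
          frobSq_conjT_mul_le Go hGo _
      _ = (M : ℝ) * frobSq ((Gᴴ * H * Fhat) * Fo) := by rw [Fintype.card_fin]
      _ ≤ (M : ℝ) * frobSq (Gᴴ * H * Fhat) := by
          exact mul_le_mul_of_nonneg_left (frobSq_mul_le _ _ hFo) (Nat.cast_nonneg _)
      _ ≤ (M : ℝ) * (spr * (ε * Np)) :=
          mul_le_mul_of_nonneg_left hXfrob (Nat.cast_nonneg _)
  calc ν * P * frobSq (Goᴴ * Gᴴ * H * Fhat * Fo)
      ≤ ν * P * ((M : ℝ) * (spr * (ε * Np))) := by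
        exact mul_le_mul_of_nonneg_left hchain (by positivity)
    _ = ν * M * Np * P * ε * spr := by ring
end

section
/- Let f : (0,∞) → [0,1] be a cumulative distribution function with f(x) = a x^d + o(x^d) as x → 0⁺ for constants a > 0 and d ≥ 2, with density f'. Then ∫₀^{c/P} log₂(1/x) f'(x) dx = o(P^{−d+1}) as P → ∞, for any fixed c > 0. -/
open Filter Asymptotics MeasureTheory

/-- Derivative of a function monotone on `(0,∞)` is nonnegative there. -/
lemma stmt15_deriv_nonneg (f f' : ℝ → ℝ) (hmono : MonotoneOn f (Set.Ioi 0))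
    (hderiv : ∀ x ∈ Set.Ioi (0 : ℝ), HasDerivAt f (f' x) x) {x : ℝ} (hx : 0 < x) :
    0 ≤ f' x := by
  have h := hasDerivAt_iff_tendsto_slope.1 (hderiv x hx)
  have h2 : Tendsto (slope f x) (nhdsWithin x (Set.Ioi x)) (nhds (f' x)) :=
    h.mono_left (nhdsWithin_mono x fun y hy => ne_of_gt hy)
  refine ge_of_tendsto h2 ?_
  filter_upwards [self_mem_nhdsWithin] with y hy
  rw [slope_def_field]
  have hxy : x < y := hy
  have : f x ≤ f y := hmono (Set.mem_Ioi.2 hx) (Set.mem_Ioi.2 (hx.trans hxy)) hxy.le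
  exact div_nonneg (by linarith) (by linarith)

/-- Key bound: the truncated logarithmic moment is bounded by an explicit expression. -/
lemma stmt15_key (f f' : ℝ → ℝ) (a : ℝ) (d : ℕ)
    (ha : 0 < a) (hd : 1 ≤ d)
    (hmono : MonotoneOn f (Set.Ioi 0))
    (hrange : ∀ x ∈ Set.Ioi (0 : ℝ), f x ∈ Set.Icc (0 : ℝ) 1)
    (hderiv : ∀ x ∈ Set.Ioi (0 : ℝ), HasDerivAt f (f' x) x)
    {ε : ℝ} (hε : 0 < ε) (hε1 : ε ≤ 1)
    (hfb : ∀ x ∈ Set.Ioc (0 : ℝ) ε, f x ≤ 2 * a * x ^ d) :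
    ∫ x in Set.Ioc (0 : ℝ) ε, Real.logb 2 (1 / x) * f' x ≤
      2 * a * ε ^ d * Real.logb 2 (1 / ε) + 2 * a / (d * Real.log 2) * ε ^ d := by
  have hlog2 : (0 : ℝ) < Real.log 2 := Real.log_pos one_lt_two
  obtain ⟨m, rfl⟩ : ∃ m, d = m + 1 := ⟨d - 1, (Nat.succ_pred_eq_of_pos (by omega)).symm⟩
  have hd0 : (0 : ℝ) < ((m + 1 : ℕ) : ℝ) := by positivity
  have hfun : (fun x => Real.logb 2 (1 / x) * f' x)
      = fun x => -Real.log x / Real.log 2 * f' x := by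
    funext y
    rw [Real.logb, one_div, Real.log_inv, neg_div]
  have hlogb_eq : ∀ y : ℝ, Real.logb 2 (1 / y) = -Real.log y / Real.log 2 := by
    intro y; rw [Real.logb, one_div, Real.log_inv, neg_div]
  have hlogbε : (0 : ℝ) ≤ Real.logb 2 (1 / ε) := by
    apply Real.logb_nonneg one_lt_two
    rw [le_div_iff₀ hε]; linarith
  have hRHSnn : 0 ≤ 2 * a * ε ^ (m + 1) * Real.logb 2 (1 / ε)
      + 2 * a / ((m + 1 : ℕ) * Real.log 2) * ε ^ (m + 1) := by
    have h1 : (0:ℝ) ≤ 2 * a * ε ^ (m + 1) := by positivity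
    have h2 : (0:ℝ) ≤ 2 * a / ((m + 1 : ℕ) * Real.log 2) * ε ^ (m + 1) := by positivity
    nlinarith
  rw [hfun]
  by_cases hint : MeasureTheory.IntegrableOn
      (fun x => -Real.log x / Real.log 2 * f' x) (Set.Ioc (0 : ℝ) ε) volume
  swap
  · rw [MeasureTheory.integral_undef hint]; exact hRHSnn
  -- main estimate on `Ioc t ε` for `t ∈ (0, ε)`
  have main : ∀ t ∈ Set.Ioo (0 : ℝ) ε,
      ∫ x in Set.Ioc t ε, -Real.log x / Real.log 2 * f' x ≤
        2 * a * ε ^ (m + 1) * Real.logb 2 (1 / ε)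
          + 2 * a / ((m + 1 : ℕ) * Real.log 2) * ε ^ (m + 1) := by
    intro t ht
    have htε : t ≤ ε := ht.2.le
    have hpos : ∀ x ∈ Set.uIcc t ε, 0 < x := by
      intro x hx
      rw [Set.uIcc_of_le htε] at hx
      exact ht.1.trans_le hx.1
    -- derivative of G x = -log x / log 2 * f x
    have hgd : ∀ x ∈ Set.uIcc t ε,
        HasDerivAt (fun y => -Real.log y / Real.log 2 * f y)
          (-Real.log x / Real.log 2 * f' x - f x / (x * Real.log 2)) x := by
      intro x hx
      have hx0 : 0 < x := hpos x hx
      have h1 : HasDerivAt (fun y => -Real.log y / Real.log 2) (-x⁻¹ / Real.log 2) x :=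
        ((Real.hasDerivAt_log hx0.ne').neg).div_const _
      have h2 := h1.mul (hderiv x hx0)
      have h3 : -Real.log x / Real.log 2 * f' x - f x / (x * Real.log 2)
          = -x⁻¹ / Real.log 2 * f x + -Real.log x / Real.log 2 * f' x := by
        simp only [div_eq_mul_inv, mul_inv]; ring
      rw [h3]; exact h2
    -- interval integrability
    have hLt : IntervalIntegrable (fun x => -Real.log x / Real.log 2 * f' x) volume t ε := by
      rw [intervalIntegrable_iff_integrableOn_Ioc_of_le htε]
      exact hint.mono_set (Set.Ioc_subset_Ioc_left ht.1.le)
    have hfc : ContinuousOn f (Set.uIcc t ε) := fun x hx =>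
      ((hderiv x (hpos x hx)).continuousAt).continuousWithinAt
    have hcont : ContinuousOn (fun x => f x / (x * Real.log 2)) (Set.uIcc t ε) := by
      apply hfc.div (continuousOn_id.mul continuousOn_const)
      intro x hx
      exact ne_of_gt (mul_pos (hpos x hx) hlog2)
    have hFc : IntervalIntegrable (fun x => f x / (x * Real.log 2)) volume t ε :=
      hcont.intervalIntegrable
    have hFTC := intervalIntegral.integral_eq_sub_of_hasDerivAt hgd (hLt.sub hFc)
    rw [intervalIntegral.integral_sub hLt hFc] at hFTC
    have hsplit : ∫ x in t..ε, -Real.log x / Real.log 2 * f' x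
        = (-Real.log ε / Real.log 2 * f ε - -Real.log t / Real.log 2 * f t)
          + ∫ x in t..ε, f x / (x * Real.log 2) := by linarith
    -- bound the boundary terms
    have hεIoc : ε ∈ Set.Ioc (0:ℝ) ε := ⟨hε, le_rfl⟩
    have hGε : -Real.log ε / Real.log 2 * f ε
        ≤ 2 * a * ε ^ (m + 1) * Real.logb 2 (1 / ε) := by
      rw [← hlogb_eq]
      have := hfb ε hεIoc
      nlinarith [hlogbε]
    have hGt : 0 ≤ -Real.log t / Real.log 2 * f t := by
      have hlt : Real.log t ≤ 0 := Real.log_nonpos ht.1.le (ht.2.le.trans hε1)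
      have hft : 0 ≤ f t := (hrange t ht.1).1
      have : 0 ≤ -Real.log t / Real.log 2 := div_nonneg (by linarith) hlog2.le
      positivity
    -- bound the remaining integral
    have hptw : ∀ x ∈ Set.Icc t ε, f x / (x * Real.log 2)
        ≤ 2 * a / Real.log 2 * x ^ m := by
      intro x hx
      have hx0 : 0 < x := ht.1.trans_le hx.1
      have hfx : f x ≤ 2 * a * x ^ (m + 1) := hfb x ⟨hx0, hx.2⟩
      rw [div_le_iff₀ (mul_pos hx0 hlog2)]
      calc f x ≤ 2 * a * x ^ (m + 1) := hfx
        _ = 2 * a / Real.log 2 * x ^ m * (x * Real.log 2) := by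
            rw [pow_succ]; field_simp
    have hmonoint : ∫ x in t..ε, f x / (x * Real.log 2)
        ≤ ∫ x in t..ε, 2 * a / Real.log 2 * x ^ m := by
      apply intervalIntegral.integral_mono_on htε hFc
      · exact (continuous_const.mul (continuous_pow _)).intervalIntegrable _ _
      · exact hptw
    have hval : ∫ x in t..ε, 2 * a / Real.log 2 * x ^ m
        = 2 * a / Real.log 2 * ((ε ^ (m + 1) - t ^ (m + 1)) / (m + 1 : ℕ)) := by
      rw [intervalIntegral.integral_const_mul, integral_pow]
      push_cast
      ring
    have htd : (0:ℝ) ≤ t ^ (m + 1) := pow_nonneg ht.1.le _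
    have hint2 : ∫ x in t..ε, f x / (x * Real.log 2)
        ≤ 2 * a / ((m + 1 : ℕ) * Real.log 2) * ε ^ (m + 1) := by
      refine hmonoint.trans ?_
      rw [hval]
      have he : (ε ^ (m + 1) - t ^ (m + 1)) / ((m + 1 : ℕ) : ℝ)
          ≤ ε ^ (m + 1) / ((m + 1 : ℕ) : ℝ) := by
        gcongr
        linarith
      calc 2 * a / Real.log 2 * ((ε ^ (m + 1) - t ^ (m + 1)) / ((m + 1 : ℕ) : ℝ))
          ≤ 2 * a / Real.log 2 * (ε ^ (m + 1) / ((m + 1 : ℕ) : ℝ)) :=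
            mul_le_mul_of_nonneg_left he (by positivity)
        _ = 2 * a / ((m + 1 : ℕ) * Real.log 2) * ε ^ (m + 1) := by
            field_simp
    rw [← intervalIntegral.integral_of_le htε, hsplit]
    linarith
  -- pass to the limit t → 0⁺
  set s : ℕ → Set ℝ := fun n => Set.Ioc (ε / (n + 2)) ε with hs
  have hn2 : ∀ n : ℕ, (0:ℝ) < (n:ℝ) + 2 := fun n => by positivity
  have hs_meas : ∀ n, MeasurableSet (s n) := fun n => measurableSet_Ioc
  have hs_mono : Monotone s := by
    intro n m hnm
    apply Set.Ioc_subset_Ioc_left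
    apply div_le_div_of_nonneg_left hε.le (hn2 n)
    have : (n:ℝ) ≤ m := by exact_mod_cast hnm
    linarith
  have hUnion : (⋃ n, s n) = Set.Ioc (0:ℝ) ε := by
    ext x
    simp only [hs, Set.mem_iUnion, Set.mem_Ioc]
    constructor
    · rintro ⟨n, h1, h2⟩
      exact ⟨(div_pos hε (hn2 n)).trans h1, h2⟩
    · rintro ⟨hx0, hxε⟩
      obtain ⟨n, hn⟩ := exists_nat_gt (ε / x)
      refine ⟨n, ?_, hxε⟩
      rw [div_lt_iff₀ (hn2 n)]
      rw [div_lt_iff₀ hx0] at hn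
      nlinarith
  have htendsto := MeasureTheory.tendsto_setIntegral_of_monotone hs_meas hs_mono
    (hUnion ▸ hint)
  rw [hUnion] at htendsto
  refine le_of_tendsto htendsto (Filter.Eventually.of_forall fun n => ?_)
  apply main
  constructor
  · exact div_pos hε (hn2 n)
  · apply div_lt_self hε
    have : (0:ℝ) ≤ (n:ℝ) := Nat.cast_nonneg n
    linarith

/-- Let `f : (0,∞) → [0,1]` be a CDF with `f(x) = a x^d + o(x^d)` as `x → 0⁺`
(`a > 0`, `d ≥ 2`) and density `f'`. Then for any fixed `c > 0`,
`∫₀^{c/P} log₂(1/x) f'(x) dx = o(P^{-d+1})` as `P → ∞`. -/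
theorem stmt15 (f f' : ℝ → ℝ) (a : ℝ) (d : ℕ) (c : ℝ)
    (ha : 0 < a) (hd : 2 ≤ d) (hc : 0 < c)
    (hmono : MonotoneOn f (Set.Ioi 0))
    (hrange : ∀ x ∈ Set.Ioi (0 : ℝ), f x ∈ Set.Icc (0 : ℝ) 1)
    (hderiv : ∀ x ∈ Set.Ioi (0 : ℝ), HasDerivAt f (f' x) x)
    (hexp : (fun x => f x - a * x ^ d) =o[nhdsWithin 0 (Set.Ioi 0)] fun x => x ^ d) :
    (fun P => ∫ x in Set.Ioc (0 : ℝ) (c / P), Real.logb 2 (1 / x) * f' x) =o[atTop]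
      fun P : ℝ => P ^ ((1 : ℝ) - d) := by
  have hlog2 : (0 : ℝ) < Real.log 2 := Real.log_pos one_lt_two
  have hd1 : 1 ≤ d := le_trans (by norm_num) hd
  -- extract a neighborhood on which `f x ≤ 2 a x ^ d`
  have hev : ∀ᶠ x in nhdsWithin 0 (Set.Ioi 0), ‖f x - a * x ^ d‖ ≤ a * ‖x ^ d‖ := hexp.def ha
  rw [eventually_nhdsWithin_iff] at hev
  obtain ⟨δ, hδ0, hδball⟩ := Metric.eventually_nhds_iff.1 hev
  have hδ : ∀ x ∈ Set.Ioo (0 : ℝ) δ, f x ≤ 2 * a * x ^ d := by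
    intro x hx
    have hdist : dist x 0 < δ := by
      rw [Real.dist_eq, sub_zero, abs_of_pos hx.1]; exact hx.2
    have h := hδball hdist hx.1
    rw [Real.norm_eq_abs, Real.norm_eq_abs, abs_of_pos (pow_pos hx.1 d)] at h
    have := (abs_le.1 h).2
    linarith
  -- the explicit bound function
  set B : ℝ → ℝ := fun P => 2 * a * (c / P) ^ d * Real.logb 2 (1 / (c / P))
      + 2 * a / (d * Real.log 2) * (c / P) ^ d with hBdef
  have hIO : (fun P => ∫ x in Set.Ioc (0 : ℝ) (c / P), Real.logb 2 (1 / x) * f' x)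
      =O[atTop] B := by
    apply Asymptotics.IsBigO.of_bound'
    filter_upwards [eventually_gt_atTop 0, eventually_ge_atTop c,
      eventually_ge_atTop (2 * c / δ)] with P hP0 hPc hPδ
    have h0 : 0 < c / P := div_pos hc hP0
    have h1 : c / P ≤ 1 := (div_le_one hP0).2 hPc
    have h2 : c / P < δ := by
      rw [div_lt_iff₀ hP0]
      have := (div_le_iff₀ hδ0).1 hPδ
      nlinarith
    have hfb : ∀ x ∈ Set.Ioc (0 : ℝ) (c / P), f x ≤ 2 * a * x ^ d :=
      fun x hx => hδ x ⟨hx.1, lt_of_le_of_lt hx.2 h2⟩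
    have hle := stmt15_key f f' a d ha hd1 hmono hrange hderiv h0 h1 hfb
    have hnn : 0 ≤ ∫ x in Set.Ioc (0 : ℝ) (c / P), Real.logb 2 (1 / x) * f' x := by
      apply MeasureTheory.setIntegral_nonneg measurableSet_Ioc
      intro x hx
      apply mul_nonneg
      · apply Real.logb_nonneg one_lt_two
        rw [le_div_iff₀ hx.1]
        have := hx.2.trans h1
        linarith
      · exact stmt15_deriv_nonneg f f' hmono hderiv hx.1
    rw [Real.norm_eq_abs, abs_of_nonneg hnn]
    exact hle.trans (le_abs_self _)
  have hconst : ∀ k : ℝ, (fun _ : ℝ => k) =o[atTop] (fun P : ℝ => P) := by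
    intro k
    refine isLittleO_const_left.2 (Or.inr ?_)
    simpa [Real.norm_eq_abs, Function.comp_def] using tendsto_abs_atTop_atTop
  have hlogo : (fun P : ℝ => Real.log P) =o[atTop] (fun P : ℝ => P) :=
    Real.isLittleO_log_id_atTop
  have h1 : (fun P : ℝ => 2 * a * (Real.log P - Real.log c) / Real.log 2
      + 2 * a / (d * Real.log 2)) =o[atTop] (fun P : ℝ => P) := by
    have h := ((hlogo.const_mul_left (2 * a / Real.log 2)).sub
        (hconst (2 * a / Real.log 2 * Real.log c))).add (hconst (2 * a / (d * Real.log 2)))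
    exact h.congr_left fun P => by ring
  have h2 : (fun P : ℝ => c ^ d * (P ^ d)⁻¹) =O[atTop] (fun P : ℝ => (P ^ d)⁻¹) :=
    isBigO_const_mul_self _ _ _
  have h3 := h2.mul_isLittleO h1
  have h4 : (fun P : ℝ => (P ^ d)⁻¹ * P) =ᶠ[atTop] (fun P : ℝ => P ^ ((1 : ℝ) - d)) := by
    filter_upwards [eventually_gt_atTop 0] with P hP
    rw [Real.rpow_sub hP, Real.rpow_one, Real.rpow_natCast]
    ring
  have hBeq : B =ᶠ[atTop] fun P : ℝ => (c ^ d * (P ^ d)⁻¹) *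
      (2 * a * (Real.log P - Real.log c) / Real.log 2 + 2 * a / (d * Real.log 2)) := by
    filter_upwards [eventually_gt_atTop 0] with P hP
    have hlogb : Real.logb 2 (1 / (c / P)) = (Real.log P - Real.log c) / Real.log 2 := by
      rw [one_div_div, Real.logb, Real.log_div (ne_of_gt hP) (ne_of_gt hc)]
    have hcp : (c / P) ^ d = c ^ d * (P ^ d)⁻¹ := by
      rw [div_pow, div_eq_mul_inv]
    simp only [hBdef]
    rw [hlogb, hcp]
    ring
  have hBo : B =o[atTop] (fun P : ℝ => P ^ ((1 : ℝ) - d)) := h3.congr' hBeq.symm h4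
  exact hIO.trans_isLittleO hBo
end
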